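/- Let r, L ∈ ℕ with r ≥ 2, let G be a group, and let A be a finite subset of G such that the growth function n ↦ |A^n| of product sets is super-polynomial (i.e., not bounded above by any polynomial in n). Then A is not an asymptotic (r,L)-approximate group. -/

import Mathlib

open Pointwise

/-- if the growth function `n ↦ |Aⁿ|` of a finite subset `A` of a group is
super-polynomial, then `A` is not an asymptotic `(r, L)`-approximate group (for `r ≥ 2`). -/
theorem superpolynomial_growth_not_asymptotic_approximate {G : Type*} [Group G]
    [DecidableEq G] (r L : ℕ) (hr : 2 ≤ r) (A : Finset G)
    (hgrow : ∀ p : Polynomial ℕ, {n : ℕ | p.eval n < (A ^ n).card}.Infinite) :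
    ¬ ∃ h0 : ℕ, ∀ h ≥ h0, ∃ X : Finset G, X.card ≤ L ∧ A ^ (h * r) ⊆ X * A ^ h := by
  rintro ⟨h0, hH⟩
  -- A is nonempty
  obtain ⟨n1, hn1mem, hn1pos⟩ := (hgrow 0).exists_gt 0
  have hn1 : 0 < (A ^ n1).card := by simpa using hn1mem
  have hA : A.Nonempty := by
    by_contra hcon
    rw [Finset.not_nonempty_iff_eq_empty] at hcon
    rw [hcon, Finset.empty_pow hn1pos.ne'] at hn1
    simp at hn1
  obtain ⟨a, ha⟩ := hA
  -- monotonicity of the growth function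
  have mono : ∀ m k : ℕ, (A ^ m).card ≤ (A ^ (m + k)).card := by
    intro m k
    calc (A ^ m).card = (A ^ m * {a ^ k}).card := (Finset.card_mul_singleton _ _).symm
      _ ≤ (A ^ (m + k)).card := by
          apply Finset.card_le_card
          rw [pow_add]
          exact Finset.mul_subset_mul_left
            (Finset.singleton_subset_iff.2 (Finset.pow_mem_pow ha))
  have mono' : ∀ m n : ℕ, m ≤ n → (A ^ m).card ≤ (A ^ n).card := by
    intro m n h
    obtain ⟨k, rfl⟩ := Nat.exists_eq_add_of_le h
    exact mono m k
  set h1 := max h0 1 with hh1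
  have h1pos : 1 ≤ h1 := le_max_right _ _
  have rpos : 0 < r := by omega
  set M := (A ^ h1).card with hM
  -- iterated doubling bound
  have key : ∀ j : ℕ, (A ^ (h1 * r ^ j)).card ≤ L ^ j * M := by
    intro j
    induction j with
    | zero => simp [hM]
    | succ j ih =>
      obtain ⟨X, hX, hsub⟩ := hH (h1 * r ^ j)
        (le_trans (le_max_left _ _) (Nat.le_mul_of_pos_right _ (Nat.pow_pos (n := j) rpos)))
      calc (A ^ (h1 * r ^ (j + 1))).card
          = (A ^ (h1 * r ^ j * r)).card := by
            rw [show h1 * r ^ (j + 1) = h1 * r ^ j * r by ring]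
        _ ≤ (X * A ^ (h1 * r ^ j)).card := Finset.card_le_card hsub
        _ ≤ X.card * (A ^ (h1 * r ^ j)).card := Finset.card_mul_le
        _ ≤ L * (L ^ j * M) := Nat.mul_le_mul hX ih
        _ = L ^ (j + 1) * M := by ring
  set C := r ^ L * M with hC
  have hrL1 : 1 ≤ r ^ L := Nat.one_le_pow _ _ rpos
  -- polynomial bound on growth
  have bound : ∀ n : ℕ, (A ^ n).card ≤ C * (n ^ L + 1) := by
    intro n
    by_cases hn : n ≤ h1
    · have h2 : (A ^ n).card ≤ M := mono' n h1 hn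
      have h3 : 1 ≤ n ^ L + 1 := by omega
      calc (A ^ n).card ≤ M := h2
        _ = 1 * (M * 1) := by ring
        _ ≤ r ^ L * (M * (n ^ L + 1)) := Nat.mul_le_mul hrL1 (Nat.mul_le_mul_left _ h3)
        _ = C * (n ^ L + 1) := by rw [hC]; ring
    · push_neg at hn
      have hex : ∃ j : ℕ, n ≤ h1 * r ^ j := by
        refine ⟨n, ?_⟩
        calc n ≤ 2 ^ n := (Nat.lt_two_pow_self (n := n)).le
          _ ≤ r ^ n := Nat.pow_le_pow_left hr n
          _ ≤ h1 * r ^ n := Nat.le_mul_of_pos_left _ h1pos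
      set j := Nat.find hex with hj
      have hjn : n ≤ h1 * r ^ j := Nat.find_spec hex
      have hjpos : j ≠ 0 := by
        intro h
        rw [h] at hjn
        simp at hjn
        omega
      have hj' : ¬ (n ≤ h1 * r ^ (j - 1)) := Nat.find_min hex (by omega)
      push_neg at hj'
      have hrj : r ^ j ≤ r * n := by
        have e1 : r ^ j = r * r ^ (j - 1) := by
          rw [← pow_succ']
          congr 1
          omega
        have e2 : r ^ (j - 1) ≤ h1 * r ^ (j - 1) := Nat.le_mul_of_pos_left _ h1pos
        rw [e1]
        exact Nat.mul_le_mul_left r (le_trans e2 hj'.le)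
      have hLpow : L ^ j ≤ (r * n) ^ L := by
        calc L ^ j ≤ (r ^ L) ^ j := Nat.pow_le_pow_left ((Nat.lt_two_pow_self (n := L)).le.trans
              (Nat.pow_le_pow_left hr L)) j
          _ = (r ^ j) ^ L := by rw [← pow_mul, ← pow_mul, Nat.mul_comm]
          _ ≤ (r * n) ^ L := Nat.pow_le_pow_left hrj L
      calc (A ^ n).card ≤ (A ^ (h1 * r ^ j)).card := mono' _ _ hjn
        _ ≤ L ^ j * M := key j
        _ ≤ (r * n) ^ L * M := Nat.mul_le_mul_right M hLpow
        _ = C * n ^ L := by rw [hC, mul_pow]; ring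
        _ ≤ C * (n ^ L + 1) := Nat.mul_le_mul_left C (by omega)
  -- contradiction with super-polynomial growth
  obtain ⟨n, hnmem⟩ := (hgrow (Polynomial.C C * (Polynomial.X ^ L + 1))).nonempty
  simp only [Set.mem_setOf_eq, Polynomial.eval_mul, Polynomial.eval_C, Polynomial.eval_add,
    Polynomial.eval_pow, Polynomial.eval_X, Polynomial.eval_one] at hnmem
  exact absurd (bound n) (by omega)
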